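/- Given integers m ≥ k ≥ 2, define q ≥ 1 and ρ by division with remainder m-1 = (k-1)q + ρ with 0 ≤ ρ ≤ k-2. Let G be a finite simple graph on n ≥ m vertices with chromatic number χ, such that every subset of the vertex set of size m includes a clique of size k. Then n ≤ χq + ρ. -/

import Mathlib

/-- Let `m ≥ k ≥ 2`, and write `m - 1 = (k-1)q + ρ` with `q ≥ 1`, `0 ≤ ρ ≤ k-2`.
If `G` is a graph on `n ≥ m` vertices such that every `m`-element vertex set
includes a clique of size `k`, then `n ≤ χ(G) * q + ρ`. -/
theorem card_le_chromaticNumber_mul_add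
    {V : Type*} [Fintype V] (G : SimpleGraph V)
    (k m q ρ : ℕ) (hk : 2 ≤ k) (hkm : k ≤ m)
    (hq : 1 ≤ q) (hρ : ρ ≤ k - 2) (hdiv : m - 1 = (k - 1) * q + ρ)
    (n : ℕ) (hn : Fintype.card V = n) (hnm : m ≤ n)
    (hagree : ∀ W : Finset V, W.card = m → ∃ K ⊆ W, G.IsNClique k K) :
    (n : ℕ∞) ≤ G.chromaticNumber * q + ρ := by
  classical
  set c : ℕ := (G.chromaticNumber).toNat with hc
  have hcol : G.Colorable c := G.colorable_chromaticNumber_of_fintype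
  have hne : G.chromaticNumber ≠ ⊤ :=
    SimpleGraph.chromaticNumber_ne_top_iff_exists.mpr ⟨_, G.colorable_of_fintype⟩
  have hcast : G.chromaticNumber = (c : ℕ∞) := (ENat.coe_toNat hne).symm
  obtain ⟨C⟩ := hcol
  -- size of color class i
  set s : Fin c → ℕ := fun i => (Finset.univ.filter fun v => C v = i).card with hs
  -- card of preimage of a color set S equals the sum of class sizes
  have hsum : ∀ S : Finset (Fin c),
      (Finset.univ.filter fun v => C v ∈ S).card = ∑ i ∈ S, s i := by
    intro S
    rw [Finset.card_eq_sum_card_fiberwise (f := C) (s := Finset.univ.filter fun v => C v ∈ S) (t := S)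
      (fun v hv => (Finset.mem_filter.mp hv).2)]
    refine Finset.sum_congr rfl fun i hi => ?_
    congr 1
    rw [Finset.filter_filter]
    apply Finset.filter_congr
    intro v _
    constructor
    · rintro ⟨-, h⟩; exact h
    · intro h; exact ⟨h ▸ hi, h⟩
  -- key pigeonhole lemma: sets using at most k-1 colors have at most m-1 vertices
  have key : ∀ S : Finset (Fin c), S.card ≤ k - 1 →
      (Finset.univ.filter fun v => C v ∈ S).card ≤ m - 1 := by
    intro S hScard
    by_contra hbig
    push_neg at hbig
    have hm : m ≤ (Finset.univ.filter fun v => C v ∈ S).card := by omega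
    obtain ⟨W, hWsub, hWcard⟩ := Finset.exists_subset_card_eq hm
    obtain ⟨K, hKW, hK⟩ := hagree W hWcard
    have hmaps : ∀ v ∈ K, C v ∈ S := fun v hv =>
      (Finset.mem_filter.mp (hWsub (hKW hv))).2
    have hlt : S.card < K.card := by rw [hK.2]; omega
    obtain ⟨u, hu, v, hv, huv, hCuv⟩ :=
      Finset.exists_ne_map_eq_of_card_lt_of_maps_to hlt hmaps
    exact C.valid (hK.1 hu hv huv) hCuv
  -- χ ≥ k - 1
  have hck : k - 1 ≤ c := by
    by_contra hlt
    push_neg at hlt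
    have := key Finset.univ (by simpa using hlt.le)
    have heq : (Finset.univ.filter fun v : V => C v ∈ (Finset.univ : Finset (Fin c)))
        = Finset.univ := by simp
    rw [heq, Finset.card_univ, hn] at this
    omega
  -- the set of big color classes has at most k-2 elements
  set S : Finset (Fin c) := Finset.univ.filter (fun i => q + 1 ≤ s i) with hSdef
  have hScard : S.card ≤ k - 2 := by
    by_contra hScard
    push_neg at hScard
    have h1 : k - 1 ≤ S.card := by omega
    obtain ⟨S', hS'S, hS'card⟩ := Finset.exists_subset_card_eq h1
    have hlb : (k - 1) * (q + 1) ≤ ∑ i ∈ S', s i := by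
      calc (k - 1) * (q + 1) = ∑ _i ∈ S', (q + 1) := by
            rw [Finset.sum_const, hS'card, smul_eq_mul]
        _ ≤ ∑ i ∈ S', s i := Finset.sum_le_sum fun i hi =>
            (Finset.mem_filter.mp (hS'S hi)).2
    have hub := key S' hS'card.le
    rw [hsum] at hub
    have : (k - 1) * (q + 1) = (k - 1) * q + (k - 1) := by ring
    omega
  -- extend S to a set T of exactly k-1 colors
  obtain ⟨T, hST, -, hTcard⟩ := Finset.exists_subsuperset_card_eq (n := k - 1)
    (S.subset_univ) (by omega) (by simpa using hck)
  -- total count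
  have htotal : n = ∑ i ∈ T, s i + ∑ i ∈ Finset.univ \ T, s i := by
    have hu : (Finset.univ.filter fun v : V => C v ∈ (Finset.univ : Finset (Fin c)))
        = Finset.univ := by simp
    have := hsum (Finset.univ : Finset (Fin c))
    rw [hu, Finset.card_univ, hn] at this
    rw [this, add_comm, Finset.sum_sdiff (T.subset_univ)]
  have hT1 : ∑ i ∈ T, s i ≤ (k - 1) * q + ρ := by
    have := key T hTcard.le
    rw [hsum] at this
    omega
  have hT2 : ∑ i ∈ Finset.univ \ T, s i ≤ (c - (k - 1)) * q := by
    have hcard : (Finset.univ \ T).card = c - (k - 1) := by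
      rw [Finset.card_sdiff_of_subset (T.subset_univ), Finset.card_univ, hTcard]
      simp
    calc ∑ i ∈ Finset.univ \ T, s i ≤ ∑ _i ∈ Finset.univ \ T, q := by
          refine Finset.sum_le_sum fun i hi => ?_
          have hiS : i ∉ S := fun h => (Finset.mem_sdiff.mp hi).2 (hST h)
          rw [hSdef] at hiS
          simp only [Finset.mem_filter, Finset.mem_univ, true_and] at hiS
          omega
      _ = (c - (k - 1)) * q := by rw [Finset.sum_const, hcard, smul_eq_mul]
  have hfinal : n ≤ c * q + ρ := by
    have hsplit : (k - 1) * q + (c - (k - 1)) * q = c * q := by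
      rw [← add_mul]
      congr 1
      omega
    omega
  rw [hcast]
  calc (n : ℕ∞) ≤ ((c * q + ρ : ℕ) : ℕ∞) := by exact_mod_cast hfinal
    _ = (c : ℕ∞) * q + ρ := by push_cast; ring
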